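/- Let n ≥ 2 and let f_1, …, f_n : [a,b] → 𝔽 all be g-differentiable at t ∈ [a,b]. Then the product ∏_{j=1}^n f_j is g-differentiable at t and (∏_{j=1}^n f_j)'_g(t) = Σ_{σ∈F_{n,1}} ∏_{j=1}^n (f_j)^{(σ_j)}_g(t*) + Σ_{k=1}^{n−1} (Δg(t*))^k Σ_{σ∈F_{n,k+1}} ∏_{j=1}^n (f_j)^{(σ_j)}_g(t*), where F_{n,k} = {σ ∈ {0,1}^n : σ has exactly k entries equal to 1}, f^{(0)} = f and f^{(1)} = f'_g. -/

import Mathlib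

open Set Filter Topology
open scoped Classical

noncomputable section

/-- The right-hand limit `g(t⁺)` of a nondecreasing function `g`. -/
def rLim (g : ℝ → ℝ) (t : ℝ) : ℝ := sInf (g '' Set.Ioi t)

/-- `Δg(t) = g(t⁺) − g(t)`. -/
def jump (g : ℝ → ℝ) (t : ℝ) : ℝ := rLim g t - g t

/-- `C_g`: the set of points near which `g` is constant. -/
def Cset (g : ℝ → ℝ) : Set ℝ :=
  {t | ∃ ε > 0, ∀ u ∈ Set.Ioo (t - ε) (t + ε), g u = g t}

/-- `D_g`: the set of discontinuity points of `g`. -/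
def Dset (g : ℝ → ℝ) : Set ℝ := {t | 0 < jump g t}

/-- The right endpoints `b_n` of the connected components of the open set `C_g`. -/
def rightEndpoints (g : ℝ → ℝ) : Set ℝ :=
  {x | x ∉ Cset g ∧ ∃ s, s < x ∧ Set.Ioo s x ⊆ Cset g}

/-- The left endpoints `a_n` of the connected components of the open set `C_g`. -/
def leftEndpoints (g : ℝ → ℝ) : Set ℝ :=
  {x | x ∉ Cset g ∧ ∃ s, x < s ∧ Set.Ioo x s ⊆ Cset g}

/-- `N_g⁻ = {a_n : n ∈ Λ} \ D_g`. -/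
def Nminus (g : ℝ → ℝ) : Set ℝ := leftEndpoints g \ Dset g

/-- `N_g⁺ = {b_n : n ∈ Λ} \ D_g`. -/
def Nplus (g : ℝ → ℝ) : Set ℝ := rightEndpoints g \ Dset g

/-- `N_g = N_g⁻ ∪ N_g⁺`. -/
def Nset (g : ℝ → ℝ) : Set ℝ := Nminus g ∪ Nplus g

/-- `t* = t` if `t ∉ C_g`, and `t* = b_n` (the right endpoint of the connected component
`(a_n, b_n)` of `C_g` containing `t`) if `t ∈ C_g`. -/
def tstar (g : ℝ → ℝ) (t : ℝ) : ℝ :=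
  if t ∈ Cset g then sSup (connectedComponentIn (Cset g) t) else t

/-- The filter along which the Stieltjes difference quotient is taken at a point of `[a,b]`:
from the right at points of `D_g ∪ N_g⁺ ∪ {a}`, from the left at points of `N_g⁻ ∪ {b}`,
two-sided otherwise. -/
def sFilter (g : ℝ → ℝ) (a b t : ℝ) : Filter ℝ :=
  if t ∈ Dset g ∨ t ∈ Nplus g ∨ t = a then 𝓝[Set.Ioi t ∩ Set.Icc a b] t
  else if t ∈ Nminus g ∨ t = b then 𝓝[Set.Iio t ∩ Set.Icc a b] t
  else 𝓝[Set.Icc a b \ {t}] t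

/-- `f` has Stieltjes derivative (`g`-derivative) `L` at `t`, relative to `[a,b]`. -/
def HasSDerivAt {K : Type*} [RCLike K] (g : ℝ → ℝ) (a b : ℝ) (f : ℝ → K) (t : ℝ) (L : K) :
    Prop :=
  Filter.Tendsto (fun s => (g s - g (tstar g t))⁻¹ • (f s - f (tstar g t)))
    (sFilter g a b (tstar g t)) (𝓝 L)

/-- `f` is `g`-differentiable at `t`, relative to `[a,b]`. -/
def SDiffAt {K : Type*} [RCLike K] (g : ℝ → ℝ) (a b : ℝ) (f : ℝ → K) (t : ℝ) : Prop :=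
  ∃ L, HasSDerivAt g a b f t L

/-- `f` is `g`-continuous at `t` relative to the domain `D`. -/
def GContAt {K : Type*} [RCLike K] (g : ℝ → ℝ) (f : ℝ → K) (D : Set ℝ) (t : ℝ) : Prop :=
  ∀ ε > 0, ∃ δ > 0, ∀ s ∈ D, |g t - g s| < δ → ‖f t - f s‖ < ε

/-- `D₁`: points of `[a,b] ∩ N_g⁻` accumulating `D_g ∩ [a,t)`. -/
def D1 (g : ℝ → ℝ) (a b : ℝ) : Set ℝ :=
  {x | x ∈ Set.Icc a b ∩ Nminus g ∧ AccPt x (𝓟 (Dset g ∩ Set.Ico a x))}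

/-- `D₂`: points of `[a,b] ∩ N_g⁺` accumulating `D_g ∩ (t,b]`. -/
def D2 (g : ℝ → ℝ) (a b : ℝ) : Set ℝ :=
  {x | x ∈ Set.Icc a b ∩ Nplus g ∧ AccPt x (𝓟 (Dset g ∩ Set.Ioc x b))}

/-- `D₃`: points of `[a,b] \ (N_g ∪ D_g)` accumulating `D_g ∩ [a,b]`. -/
def D3 (g : ℝ → ℝ) (a b : ℝ) : Set ℝ :=
  {x | x ∈ Set.Icc a b \ (Nset g ∪ Dset g) ∧ AccPt x (𝓟 (Dset g ∩ Set.Icc a b))}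

/-- `D̃₁`: points of `[a,b] ∩ N_g⁻` not accumulating `D_g ∩ [a,t)`. -/
def Dt1 (g : ℝ → ℝ) (a b : ℝ) : Set ℝ :=
  {x | x ∈ Set.Icc a b ∩ Nminus g ∧ ¬ AccPt x (𝓟 (Dset g ∩ Set.Ico a x))}

/-- `D̃₂`: points of `[a,b] ∩ (N_g⁺ ∪ D_g)` not accumulating `D_g ∩ (t,b]`. -/
def Dt2 (g : ℝ → ℝ) (a b : ℝ) : Set ℝ :=
  {x | x ∈ Set.Icc a b ∩ (Nplus g ∪ Dset g) ∧ ¬ AccPt x (𝓟 (Dset g ∩ Set.Ioc x b))}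

/-- `D̃₃`: points of `[a,b] \ (C_g ∪ N_g ∪ D_g)` not accumulating `D_g ∩ [a,b]`. -/
def Dt3 (g : ℝ → ℝ) (a b : ℝ) : Set ℝ :=
  {x | x ∈ Set.Icc a b \ (Cset g ∪ Nset g ∪ Dset g) ∧ ¬ AccPt x (𝓟 (Dset g ∩ Set.Icc a b))}

/-- `C₁`: points of `[a,b] ∩ N_g⁻` accumulating `C_g ∩ [a,t)`. -/
def C1 (g : ℝ → ℝ) (a b : ℝ) : Set ℝ :=
  {x | x ∈ Set.Icc a b ∩ Nminus g ∧ AccPt x (𝓟 (Cset g ∩ Set.Ico a x))}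

/-- `C₂`: points of `[a,b] ∩ (N_g⁺ ∪ D_g)` accumulating `C_g ∩ (t,b]`. -/
def C2 (g : ℝ → ℝ) (a b : ℝ) : Set ℝ :=
  {x | x ∈ Set.Icc a b ∩ (Nplus g ∪ Dset g) ∧ AccPt x (𝓟 (Cset g ∩ Set.Ioc x b))}

/-- `C₃`: points of `[a,b] \ (C_g ∪ N_g ∪ D_g)` accumulating `C_g ∩ [a,b]`. -/
def C3 (g : ℝ → ℝ) (a b : ℝ) : Set ℝ :=
  {x | x ∈ Set.Icc a b \ (Cset g ∪ Nset g ∪ Dset g) ∧ AccPt x (𝓟 (Cset g ∩ Set.Icc a b))}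

/-- `A_g = {t : sup{s ∈ [a,b] : g(s) = g(t)} ∈ D_g}`. -/
def Ag (g : ℝ → ℝ) (a b : ℝ) : Set ℝ :=
  {t | sSup {s | s ∈ Set.Icc a b ∧ g s = g t} ∈ Dset g}

/-- `H_g`: points lying in some `(s₁, s₂]` with `s₁, s₂ ∈ D_g` and `(s₁, s₂) ⊆ C_g`. -/
def Hg (g : ℝ → ℝ) : Set ℝ :=
  {t | ∃ s₁ ∈ Dset g, ∃ s₂ ∈ Dset g, t ∈ Set.Ioc s₁ s₂ ∧ Set.Ioo s₁ s₂ ⊆ Cset g}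

/-- Membership in `BC_g([a,b], K)`: bounded and `g`-continuous on `[a,b]`. -/
def MemBCg {K : Type*} [RCLike K] (g : ℝ → ℝ) (a b : ℝ) (f : ℝ → K) : Prop :=
  (∃ M, ∀ s ∈ Set.Icc a b, ‖f s‖ ≤ M) ∧ ∀ s ∈ Set.Icc a b, GContAt g f (Set.Icc a b) s

/-- Membership in `BC¹_g([a,b], K)`. -/
def MemBC1g {K : Type*} [RCLike K] (g : ℝ → ℝ) (a b : ℝ) (f : ℝ → K) : Prop :=
  MemBCg g a b f ∧
    ∃ f' : ℝ → K, (∀ s ∈ Set.Icc a b, HasSDerivAt g a b f s (f' s)) ∧ MemBCg g a b f'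

-- auxiliary lemmas
lemma jump_nonneg (g : ℝ → ℝ) (hg : Monotone g) (T : ℝ) : 0 ≤ jump g T := by
  have h1 : g T ≤ sInf (g '' Set.Ioi T) := by
    refine le_csInf ⟨g (T+1), ⟨T+1, by simp, rfl⟩⟩ ?_
    rintro x ⟨y, hy, rfl⟩
    exact hg (le_of_lt hy)
  simpa [jump, rLim] using h1

lemma jump_eq_zero (g : ℝ → ℝ) (hg : Monotone g) {T : ℝ} (hT : T ∉ Dset g) :
    jump g T = 0 :=
  le_antisymm (not_lt.1 hT) (jump_nonneg g hg T)

lemma tendsto_g_sub (g : ℝ → ℝ) (hg : Monotone g)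
    (hlc : ∀ x : ℝ, ContinuousWithinAt g (Set.Iio x) x) (a b T : ℝ)
    (hbD : b ∉ Dset g) :
    Tendsto (fun s => g s - g T) (sFilter g a b T) (𝓝 (jump g T)) := by
  unfold sFilter
  split_ifs with h1 h2
  · have : Tendsto g (𝓝[Set.Ioi T ∩ Set.Icc a b] T) (𝓝 (rLim g T)) :=
      (hg.tendsto_nhdsGT T).mono_left (nhdsWithin_mono _ inter_subset_left)
    simpa [jump] using this.sub_const (g T)
  · have hTD : T ∉ Dset g := by
      rcases h2 with h | rfl
      · exact h.2
      · exact hbD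
    have : Tendsto g (𝓝[Set.Iio T ∩ Set.Icc a b] T) (𝓝 (g T)) :=
      (hlc T).mono_left (nhdsWithin_mono _ inter_subset_left)
    have := this.sub_const (g T)
    simpa [jump_eq_zero g hg hTD] using this
  · have hTD : T ∉ Dset g := fun h => h1 (Or.inl h)
    have hz := jump_eq_zero g hg hTD
    have hright : Tendsto g (𝓝[>] T) (𝓝 (g T)) := by
      have := hg.tendsto_nhdsGT T
      have hr : rLim g T = g T := by
        have : rLim g T - g T = 0 := hz
        linarith
      rw [← hr]; exact this
    have hcomb : Tendsto g (𝓝[≠] T) (𝓝 (g T)) := by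
      rw [← nhdsLT_sup_nhdsGT, tendsto_sup]
      exact ⟨hlc T, hright⟩
    have : Tendsto g (𝓝[Set.Icc a b \ {T}] T) (𝓝 (g T)) :=
      hcomb.mono_left (nhdsWithin_mono _ (fun x hx => hx.2))
    simpa [hz] using this.sub_const (g T)

open Finset
lemma prod_ite_split {K : Type*} [CommRing K] {n : ℕ} (q c : Fin n → K) (S : Finset (Fin n)) :
    (∏ j, (if j ∈ S then q j else c j)) = (∏ j ∈ S, q j) * ∏ j ∈ univ \ S, c j := by
  rw [← Finset.prod_sdiff (Finset.subset_univ S)]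
  rw [Finset.prod_congr rfl (fun j hj => if_neg (Finset.mem_sdiff.1 hj).2),
      Finset.prod_congr rfl (fun j (hj : j ∈ S) => if_pos hj), mul_comm]

lemma key_alg {K : Type*} [RCLike K] {n : ℕ} (hn : 1 ≤ n) (h : ℝ) (hne : h ≠ 0)
    (q c : Fin n → K) :
    h⁻¹ • ((∏ j, (c j + h • q j)) - ∏ j, c j) =
      (∑ S ∈ Finset.powersetCard 1 (Finset.univ : Finset (Fin n)),
        ∏ j, (if j ∈ S then q j else c j)) +
      ∑ k ∈ Finset.Ico 1 n, h ^ k •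
        ∑ S ∈ Finset.powersetCard (k+1) (Finset.univ : Finset (Fin n)),
          ∏ j, (if j ∈ S then q j else c j) := by
  classical
  set H : K := (h : K) with hH
  have Hne : H ≠ 0 := by simpa [hH] using hne
  set G : ℕ → K := fun m => ∑ S ∈ Finset.powersetCard m (Finset.univ : Finset (Fin n)),
      (∏ j ∈ S, q j) * ∏ j ∈ univ \ S, c j with hG
  have hPC : ∀ m, (∑ S ∈ Finset.powersetCard m (Finset.univ : Finset (Fin n)),
      ∏ j, (if j ∈ S then q j else c j)) = G m := fun m =>
    Finset.sum_congr rfl fun S _ => prod_ite_split q c S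
  have expand : (∏ j, (c j + h • q j)) = ∑ m ∈ Finset.range (n+1), H ^ m * G m := by
    have e1 : (∏ j, (c j + h • q j)) = ∏ j, (H * q j + c j) := by
      refine Finset.prod_congr rfl fun j _ => ?_
      rw [RCLike.real_smul_eq_coe_mul, add_comm]
    rw [e1, Finset.prod_add]
    rw [show (univ : Finset (Fin n)).powerset
        = (range ((univ : Finset (Fin n)).card + 1)).disjiUnion
            (fun i => powersetCard i (univ : Finset (Fin n)))
            (show (((range ((univ : Finset (Fin n)).card + 1)) : Finset ℕ) : Set ℕ).PairwiseDisjoint (fun i => powersetCard i (univ : Finset (Fin n))) from fun i _ j _ hij => Finset.disjoint_left.mpr fun _x hi hj => hij ((Finset.mem_powersetCard.mp hi).2.symm.trans (Finset.mem_powersetCard.mp hj).2)) from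
      Finset.powerset_card_disjiUnion _]
    rw [Finset.sum_disjiUnion]
    rw [Finset.card_univ, Fintype.card_fin]
    refine Finset.sum_congr rfl fun m hm => ?_
    rw [Finset.mul_sum]
    refine Finset.sum_congr rfl fun S hS => ?_
    have hcard : S.card = m := (Finset.mem_powersetCard.1 hS).2
    rw [Finset.prod_mul_distrib, Finset.prod_const, hcard, mul_assoc]
  have hG0 : G 0 = ∏ j, c j := by
    simp [hG, Finset.powersetCard_zero]
  -- main computation
  rw [expand, Finset.sum_range_succ']
  simp only [pow_zero, one_mul, hG0]
  rw [add_sub_cancel_right, RCLike.real_smul_eq_coe_mul, RCLike.ofReal_inv, ← hH,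
      Finset.mul_sum]
  have e2 : ∀ m, H⁻¹ * (H ^ (m+1) * G (m+1)) = H ^ m * G (m+1) := by
    intro m
    rw [pow_succ', ← mul_assoc, ← mul_assoc, inv_mul_cancel₀ Hne, one_mul]
  rw [Finset.sum_congr rfl fun m _ => e2 m]
  have hins : Finset.range n = insert 0 (Finset.Ico 1 n) := by
    ext x; simp [Finset.mem_Ico, Finset.mem_range]; omega
  rw [hins, Finset.sum_insert (by simp), pow_zero, one_mul, hPC]
  congr 1
  refine Finset.sum_congr rfl fun k _ => ?_
  rw [hPC, RCLike.real_smul_eq_coe_mul, RCLike.ofReal_pow, ← hH]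

/-- Product rule for a finite number of `g`-differentiable functions. -/
theorem stmt1 {K : Type*} [RCLike K] (g : ℝ → ℝ) (hg : Monotone g)
    (hlc : ∀ x : ℝ, ContinuousWithinAt g (Set.Iio x) x)
    (a b : ℝ) (hab : a < b) (ha : a ∉ Nminus g)
    (hb : b ∉ Dset g ∪ Cset g ∪ Nplus g)
    (n : ℕ) (hn : 2 ≤ n) (f : Fin n → ℝ → K) (L : Fin n → K)
    (t : ℝ) (ht : t ∈ Set.Icc a b)
    (hf : ∀ j, HasSDerivAt g a b (f j) t (L j)) :
    HasSDerivAt g a b (fun s => ∏ j, f j s) t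
      ((∑ S ∈ Finset.powersetCard 1 (Finset.univ : Finset (Fin n)),
          ∏ j, (if j ∈ S then L j else f j (tstar g t))) +
        ∑ k ∈ Finset.Ico 1 n, (jump g (tstar g t)) ^ k •
          ∑ S ∈ Finset.powersetCard (k + 1) (Finset.univ : Finset (Fin n)),
            ∏ j, (if j ∈ S then L j else f j (tstar g t))) := by
  classical
  set T : ℝ := tstar g t with hT
  set F : Filter ℝ := sFilter g a b T with hF
  set c : Fin n → K := fun j => f j T with hc
  set Q : Fin n → ℝ → K := fun j s => (g s - g T)⁻¹ • (f j s - f j T) with hQdef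
  have hQ : ∀ j, Tendsto (Q j) F (𝓝 (L j)) := hf
  have hbD : b ∉ Dset g := fun hm => hb (Or.inl (Or.inl hm))
  have hΔ : Tendsto (fun s => g s - g T) F (𝓝 (jump g T)) :=
    tendsto_g_sub g hg hlc a b T hbD
  set E : Set ℝ := {s | g s = g T} with hE
  -- the target value
  set V : K := ((∑ S ∈ Finset.powersetCard 1 (Finset.univ : Finset (Fin n)),
          ∏ j, (if j ∈ S then L j else c j)) +
        ∑ k ∈ Finset.Ico 1 n, (jump g T) ^ k •
          ∑ S ∈ Finset.powersetCard (k + 1) (Finset.univ : Finset (Fin n)),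
            ∏ j, (if j ∈ S then L j else c j)) with hV
  show Tendsto (fun s => (g s - g T)⁻¹ • ((∏ j, f j s) - ∏ j, f j T)) F (𝓝 V)
  -- convergence of the expanded expression along F
  have hA : Tendsto (fun s =>
      (∑ S ∈ Finset.powersetCard 1 (Finset.univ : Finset (Fin n)),
        ∏ j, (if j ∈ S then Q j s else c j)) +
      ∑ k ∈ Finset.Ico 1 n, (g s - g T) ^ k •
        ∑ S ∈ Finset.powersetCard (k+1) (Finset.univ : Finset (Fin n)),
          ∏ j, (if j ∈ S then Q j s else c j)) F (𝓝 V) := by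
    have hterm : ∀ (S : Finset (Fin n)) (j : Fin n),
        Tendsto (fun s => if j ∈ S then Q j s else c j) F
          (𝓝 (if j ∈ S then L j else c j)) := by
      intro S j
      by_cases hjS : j ∈ S
      · simpa [hjS] using hQ j
      · simpa [hjS] using (tendsto_const_nhds : Tendsto (fun _ : ℝ => c j) F _)
    refine Tendsto.add ?_ ?_
    · exact tendsto_finset_sum _ fun S _ => tendsto_finset_prod _ fun j _ => hterm S j
    · refine tendsto_finset_sum _ fun k _ => ?_
      exact (hΔ.pow k).smul
        (tendsto_finset_sum _ fun S _ => tendsto_finset_prod _ fun j _ => hterm S j)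
  -- split the filter into E and Eᶜ parts
  have hsplit : ∀ {p : ℝ → K} {l : Filter K},
      Tendsto p (F ⊓ 𝓟 E) l → Tendsto p (F ⊓ 𝓟 Eᶜ) l → Tendsto p F l := by
    intro p l h1 h2 U hU
    have m1 := h1 hU
    have m2 := h2 hU
    rw [Filter.mem_map, Filter.mem_inf_principal] at m1 m2
    rw [Filter.mem_map]
    filter_upwards [m1, m2] with x hx1 hx2
    by_cases hxE : x ∈ E
    · exact hx1 hxE
    · exact hx2 hxE
  apply hsplit
  · -- on E the difference quotients vanish
    by_cases hbot : F ⊓ 𝓟 E = ⊥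
    · rw [hbot]; exact tendsto_bot
    · haveI : (F ⊓ 𝓟 E).NeBot := ⟨hbot⟩
      have hQ0 : ∀ j, Q j =ᶠ[F ⊓ 𝓟 E] (fun _ => (0 : K)) := by
        intro j
        rw [EventuallyEq, Filter.eventually_inf_principal]
        refine Filter.Eventually.of_forall fun s hs => ?_
        have : g s - g T = 0 := by simpa [hE, sub_eq_zero] using hs
        simp [hQdef, this]
      have hL0 : ∀ j, L j = 0 := by
        intro j
        have h1 : Tendsto (Q j) (F ⊓ 𝓟 E) (𝓝 (L j)) := (hQ j).mono_left inf_le_left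
        have h2 : Tendsto (Q j) (F ⊓ 𝓟 E) (𝓝 (0 : K)) :=
          (tendsto_const_nhds).congr' (hQ0 j).symm
        exact tendsto_nhds_unique h1 h2
      have hV0 : V = 0 := by
        have hzero : ∀ m : ℕ, 1 ≤ m →
            (∑ S ∈ Finset.powersetCard m (Finset.univ : Finset (Fin n)),
              ∏ j, (if j ∈ S then L j else c j)) = 0 := by
          intro m hm
          refine Finset.sum_eq_zero fun S hS => ?_
          have hcard : S.card = m := (Finset.mem_powersetCard.1 hS).2
          have hne : S.Nonempty := Finset.card_pos.1 (by omega)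
          obtain ⟨j0, hj0⟩ := hne
          exact Finset.prod_eq_zero (Finset.mem_univ j0) (by simp [hj0, hL0 j0])
        rw [hV, hzero 1 le_rfl, zero_add]
        refine Finset.sum_eq_zero fun k hk => ?_
        rw [hzero (k+1) (by omega), smul_zero]
      rw [hV0]
      have hq0 : (fun s => (g s - g T)⁻¹ • ((∏ j, f j s) - ∏ j, f j T))
          =ᶠ[F ⊓ 𝓟 E] (fun _ => (0 : K)) := by
        rw [EventuallyEq, Filter.eventually_inf_principal]
        refine Filter.Eventually.of_forall fun s hs => ?_
        have : g s - g T = 0 := by simpa [hE, sub_eq_zero] using hs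
        simp [this]
      exact (tendsto_const_nhds).congr' hq0.symm
  · -- on Eᶜ the quotient coincides with the expanded expression
    refine (hA.mono_left inf_le_left).congr' ?_
    rw [EventuallyEq, Filter.eventually_inf_principal]
    refine Filter.Eventually.of_forall fun s hs => ?_
    have hne : g s - g T ≠ 0 := by
      simpa [hE, sub_eq_zero] using hs
    have hfs : ∀ j, c j + (g s - g T) • Q j s = f j s := by
      intro j
      rw [hQdef]
      simp only [smul_smul, mul_inv_cancel₀ hne, one_smul]
      rw [hc]; ring
    have := key_alg (K := K) (n := n) (by omega) (g s - g T) hne (fun j => Q j s) c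
    rw [Finset.prod_congr rfl (fun j _ => hfs j)] at this
    rw [← this]
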